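/- Let S be a finite set, γ ∈ (0,1), Q an S×S row-stochastic matrix, d : S → ℝ with d(y) ≥ 0 and γ·Σ_{x∈S} d(x)Q(x,y) ≤ d(y) for all y ∈ S, and φ : S → ℝ^κ a feature map such that the Gram matrix Σ_{x∈S} d(x)·φ(x)φ(x)ᵀ is positive definite. Define the κ×κ matrix A = Σ_{x∈S} d(x)·φ(x)·(φ(x) − γ·Σ_{y∈S} Q(x,y)φ(y))ᵀ. Then vᵀAv > 0 for every nonzero v ∈ ℝ^κ. -/

import Mathlib

open Matrix

lemma comp_aux {S : Type*} [Fintype S] {κ : ℕ} (d : S → ℝ) (φ c : S → Fin κ → ℝ)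
    (M : Matrix (Fin κ) (Fin κ) ℝ) (hM : ∀ i j, M i j = ∑ x, d x * (φ x i * c x j))
    (v : Fin κ → ℝ) :
    v ⬝ᵥ M.mulVec v = ∑ x, d x * ((∑ i, φ x i * v i) * (∑ j, c x j * v j)) := by
  calc v ⬝ᵥ M.mulVec v = ∑ i, ∑ j, ∑ x, v i * (d x * (φ x i * c x j) * v j) := by
        simp [dotProduct, Matrix.mulVec, hM, Finset.sum_mul, Finset.mul_sum, mul_assoc]
    _ = ∑ i, ∑ x, ∑ j, v i * (d x * (φ x i * c x j) * v j) :=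
        Finset.sum_congr rfl fun i _ => Finset.sum_comm
    _ = ∑ x, ∑ i, ∑ j, v i * (d x * (φ x i * c x j) * v j) := Finset.sum_comm
    _ = ∑ x, d x * ((∑ i, φ x i * v i) * (∑ j, c x j * v j)) := by
        refine Finset.sum_congr rfl fun x _ => ?_
        simp only [Finset.mul_sum, Finset.sum_mul]
        rw [Finset.sum_comm]
        refine Finset.sum_congr rfl fun i _ => Finset.sum_congr rfl fun j _ => ?_
        ring

theorem stmt11 {S : Type*} [Fintype S] {κ : ℕ} (γ : ℝ) (hγ : γ ∈ Set.Ioo (0 : ℝ) 1)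
    (Q : Matrix S S ℝ) (hQ0 : ∀ x y, 0 ≤ Q x y) (hQ1 : ∀ x, ∑ y, Q x y = 1)
    (d : S → ℝ) (hd0 : ∀ y, 0 ≤ d y) (hd : ∀ y, γ * ∑ x, d x * Q x y ≤ d y)
    (φ : S → Fin κ → ℝ)
    (hgram : (Matrix.of fun i j => ∑ x, d x * (φ x i * φ x j)).PosDef)
    (A : Matrix (Fin κ) (Fin κ) ℝ)
    (hA : ∀ i j, A i j = ∑ x, d x * (φ x i * (φ x j - γ * ∑ y, Q x y * φ y j))) :
    ∀ v : Fin κ → ℝ, v ≠ 0 → 0 < v ⬝ᵥ A.mulVec v := by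
  intro v hv
  obtain ⟨hγ0, hγ1⟩ := hγ
  set f : S → ℝ := fun x => ∑ i, φ x i * v i with hf
  set g : S → ℝ := fun x => ∑ y, Q x y * f y with hg
  -- Gram positivity : T > 0
  have hGram : v ⬝ᵥ (Matrix.of fun i j => ∑ x, d x * (φ x i * φ x j)).mulVec v
      = ∑ x, d x * (f x * f x) := comp_aux d φ φ _ (fun i j => rfl) v
  have hT : 0 < ∑ x, d x * (f x * f x) := by
    have := hgram.dotProduct_mulVec_pos hv
    simpa [hGram] using this
  have hswap : ∀ x, (∑ j, (∑ y, Q x y * φ y j) * v j) = g x := by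
    intro x
    simp only [hg, hf, Finset.sum_mul, Finset.mul_sum]
    rw [Finset.sum_comm]
    exact Finset.sum_congr rfl fun y _ => Finset.sum_congr rfl fun j _ => by ring
  -- value of the quadratic form
  have hAv : v ⬝ᵥ A.mulVec v = ∑ x, d x * (f x * (f x - γ * g x)) := by
    rw [comp_aux d φ (fun x j => φ x j - γ * ∑ y, Q x y * φ y j) A hA v]
    refine Finset.sum_congr rfl fun x _ => ?_
    have h1 : (∑ j, (φ x j - γ * ∑ y, Q x y * φ y j) * v j) = f x - γ * g x := by
      have : (∑ j, (φ x j - γ * ∑ y, Q x y * φ y j) * v j)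
          = ∑ j, (φ x j * v j - γ * ((∑ y, Q x y * φ y j) * v j)) :=
        Finset.sum_congr rfl fun j _ => by ring
      rw [this, Finset.sum_sub_distrib, ← Finset.mul_sum, hswap x, hf]
    rw [h1]
  rw [hAv]
  -- Jensen : g x ^ 2 ≤ ∑ y, Q x y * f y ^ 2
  have hJensen : ∀ x, g x * g x ≤ ∑ y, Q x y * (f y * f y) := by
    intro x
    have hcs := Finset.sum_mul_sq_le_sq_mul_sq Finset.univ
      (fun y => Real.sqrt (Q x y)) (fun y => Real.sqrt (Q x y) * f y)
    have e1 : ∀ y, Real.sqrt (Q x y) * (Real.sqrt (Q x y) * f y) = Q x y * f y := by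
      intro y; rw [← mul_assoc, Real.mul_self_sqrt (hQ0 x y)]
    have e2 : ∀ y, (Real.sqrt (Q x y)) ^ 2 = Q x y := fun y => Real.sq_sqrt (hQ0 x y)
    have e3 : ∀ y, (Real.sqrt (Q x y) * f y) ^ 2 = Q x y * (f y * f y) := by
      intro y; rw [mul_pow, Real.sq_sqrt (hQ0 x y)]; ring
    simp only [e1, e2, e3, hQ1 x, one_mul] at hcs
    calc g x * g x = (∑ y, Q x y * f y) ^ 2 := by rw [hg]; ring
      _ ≤ ∑ y, Q x y * (f y * f y) := hcs
  -- key summed bound: γ * ∑ d x * (∑ Q f²) ≤ ∑ d f²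
  have key : ∀ F : S → ℝ, γ * ∑ x, d x * ∑ y, Q x y * F y
      = ∑ y, (γ * ∑ x, d x * Q x y) * F y := by
    intro F
    rw [Finset.mul_sum]
    rw [show (∑ x, γ * (d x * ∑ y, Q x y * F y))
          = ∑ x, ∑ y, γ * (d x * Q x y) * F y from
        Finset.sum_congr rfl fun x _ => by
          rw [Finset.mul_sum, Finset.mul_sum]
          exact Finset.sum_congr rfl fun y _ => by ring]
    rw [Finset.sum_comm]
    refine Finset.sum_congr rfl fun y _ => ?_
    rw [mul_assoc, Finset.sum_mul, Finset.mul_sum]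
    exact Finset.sum_congr rfl fun x _ => by ring
  have hK : γ * ∑ x, d x * ∑ y, Q x y * (f y * f y) ≤ ∑ x, d x * (f x * f x) := by
    rw [key (fun y => f y * f y)]
    exact Finset.sum_le_sum fun y _ =>
      mul_le_mul_of_nonneg_right (hd y) (mul_self_nonneg (f y))
  -- pointwise AM-GM: d x * (f x * g x) ≤ d x * ((f x * f x + g x * g x)/2)
  have hC : ∑ x, d x * (f x * g x)
      ≤ (∑ x, d x * (f x * f x)) / 2 + (∑ x, d x * ∑ y, Q x y * (f y * f y)) / 2 := by
    calc ∑ x, d x * (f x * g x)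
        ≤ ∑ x, (d x * (f x * f x) / 2 + d x * (∑ y, Q x y * (f y * f y)) / 2) := by
          refine Finset.sum_le_sum fun x _ => ?_
          have h1 : f x * g x ≤ (f x * f x + g x * g x) / 2 := by nlinarith [sq_nonneg (f x - g x)]
          have h2 : d x * (f x * g x) ≤ d x * ((f x * f x + g x * g x) / 2) :=
            mul_le_mul_of_nonneg_left h1 (hd0 x)
          have h3 : d x * ((f x * f x + g x * g x) / 2)
              ≤ d x * ((f x * f x + ∑ y, Q x y * (f y * f y)) / 2) := by
            have := hJensen x
            have := hd0 x
            nlinarith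
          nlinarith [h2, h3]
      _ = (∑ x, d x * (f x * f x)) / 2 + (∑ x, d x * ∑ y, Q x y * (f y * f y)) / 2 := by
          rw [Finset.sum_add_distrib, Finset.sum_div, Finset.sum_div]
  -- assemble
  have expand : ∑ x, d x * (f x * (f x - γ * g x))
      = (∑ x, d x * (f x * f x)) - γ * ∑ x, d x * (f x * g x) := by
    rw [Finset.mul_sum, ← Finset.sum_sub_distrib]
    exact Finset.sum_congr rfl fun x _ => by ring
  rw [expand]
  set T := ∑ x, d x * (f x * f x)
  set C := ∑ x, d x * (f x * g x)
  set K := ∑ x, d x * ∑ y, Q x y * (f y * f y)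
  have hK0 : 0 ≤ K := Finset.sum_nonneg fun x _ => mul_nonneg (hd0 x)
    (Finset.sum_nonneg fun y _ => mul_nonneg (hQ0 x y) (mul_self_nonneg _))
  nlinarith [hK, hC, hT, hγ0, hγ1, mul_le_mul_of_nonneg_left hC (le_of_lt hγ0)]
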